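/- Let q ∈ k be nonzero, A = k_q[u,v] the quantum plane with uv = qvu, and A' = k_q[u',v']. Define τ : A⊗A' → A'⊗A on generators by τ(u⊗u') = qu'⊗u, τ(u⊗v') = q²v'⊗u, τ(v⊗u') = q²u'⊗v + (q−q³)v'⊗u, τ(v⊗v') = qv'⊗v (extended as a graded twisting map). Then the algebra R generated by u, v, u', v' with relations uv = qvu, u'v' = qv'u', uu' = qu'u, vu' = q²u'v + (q−q³)v'u, uv' = q²v'u, vv' = qv'v has k-basis {(u')^{i₁}(v')^{i₂}u^{i₃}v^{i₄} : i₁,i₂,i₃,i₄ ∈ ℕ}. -/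

import Mathlib

open FreeAlgebra

/-- The defining relations of the twisted tensor product `k_q[u',v'] ⊗^τ k_q[u,v]` of
two quantum planes, on generators `u = ι 0`, `v = ι 1`, `u' = ι 2`, `v' = ι 3`:
`uv = qvu`, `u'v' = qv'u'`, `uu' = qu'u`, `vu' = q²u'v + (q−q³)v'u`,
`uv' = q²v'u`, `vv' = qv'v`. -/
inductive TTPRel (k : Type*) [Field k] (q : k) :
    FreeAlgebra k (Fin 4) → FreeAlgebra k (Fin 4) → Prop
  | uv : TTPRel k q (ι k 0 * ι k 1) (q • (ι k 1 * ι k 0))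
  | u'v' : TTPRel k q (ι k 2 * ι k 3) (q • (ι k 3 * ι k 2))
  | uu' : TTPRel k q (ι k 0 * ι k 2) (q • (ι k 2 * ι k 0))
  | vu' : TTPRel k q (ι k 1 * ι k 2)
      (q ^ 2 • (ι k 2 * ι k 1) + (q - q ^ 3) • (ι k 3 * ι k 0))
  | uv' : TTPRel k q (ι k 0 * ι k 3) (q ^ 2 • (ι k 3 * ι k 0))
  | vv' : TTPRel k q (ι k 1 * ι k 3) (q • (ι k 3 * ι k 1))

namespace TTPaux

abbrev I4 : Type := ℕ × ℕ × ℕ × ℕ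

variable {k : Type*} [Field k] (q : k)

/-- generic: if `x y = c • (y x)` then `x yⁿ = cⁿ • (yⁿ x)`. -/
lemma comm_pow {A : Type*} [Ring A] [Algebra k A] {x y : A} {c : k}
    (h : x * y = c • (y * x)) (n : ℕ) : x * y ^ n = c ^ n • (y ^ n * x) := by
  induction n with
  | zero => simp
  | succ n ih =>
    rw [pow_succ', ← mul_assoc, h, smul_mul_assoc, mul_assoc, ih, mul_smul_comm, smul_smul,
      ← mul_assoc, ← pow_succ', ← pow_succ']

lemma swap_smul {A : Type*} [Ring A] [Algebra k A] {x y : A} {c : k} (hc : c ≠ 0)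
    (h : x * y = c • (y * x)) : y * x = c⁻¹ • (x * y) := by
  rw [h, smul_smul, inv_mul_cancel₀ hc, one_smul]

noncomputable abbrev e (i : I4) : (I4 →₀ k) := Finsupp.single i 1

noncomputable def opU' : (I4 →₀ k) →ₗ[k] (I4 →₀ k) :=
  Finsupp.lift _ k _ fun i => e (i.1 + 1, i.2.1, i.2.2.1, i.2.2.2)

noncomputable def opV' : (I4 →₀ k) →ₗ[k] (I4 →₀ k) :=
  Finsupp.lift _ k _ fun i => (q⁻¹ ^ i.1) • e (i.1, i.2.1 + 1, i.2.2.1, i.2.2.2)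

noncomputable def opU : (I4 →₀ k) →ₗ[k] (I4 →₀ k) :=
  Finsupp.lift _ k _ fun i => (q ^ (i.1 + 2 * i.2.1)) • e (i.1, i.2.1, i.2.2.1 + 1, i.2.2.2)

noncomputable def opV : (I4 →₀ k) →ₗ[k] (I4 →₀ k) :=
  Finsupp.lift _ k _ fun i =>
    (q ^ (2 * i.1 + i.2.1) * q⁻¹ ^ i.2.2.1) • e (i.1, i.2.1, i.2.2.1, i.2.2.2 + 1)
    + (q ^ (2 * i.2.1) * (q - q ^ (2 * i.1 + 1))) • e (i.1 - 1, i.2.1 + 1, i.2.2.1 + 1, i.2.2.2)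

lemma opU'_single (i : I4) (r : k) :
    opU' (Finsupp.single i r) = Finsupp.single (i.1 + 1, i.2.1, i.2.2.1, i.2.2.2) r := by
  simp [opU', Finsupp.lift_apply, Finsupp.smul_single]

lemma opV'_single (i : I4) (r : k) :
    opV' q (Finsupp.single i r) =
      Finsupp.single (i.1, i.2.1 + 1, i.2.2.1, i.2.2.2) (q⁻¹ ^ i.1 * r) := by
  simp [opV', Finsupp.lift_apply, Finsupp.smul_single, mul_comm]

lemma opU_single (i : I4) (r : k) :
    opU q (Finsupp.single i r) =
      Finsupp.single (i.1, i.2.1, i.2.2.1 + 1, i.2.2.2) (q ^ (i.1 + 2 * i.2.1) * r) := by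
  simp [opU, Finsupp.lift_apply, Finsupp.smul_single, mul_comm]

lemma opV_single (i : I4) (r : k) :
    opV q (Finsupp.single i r) =
      Finsupp.single (i.1, i.2.1, i.2.2.1, i.2.2.2 + 1) (q ^ (2 * i.1 + i.2.1) * q⁻¹ ^ i.2.2.1 * r)
      + Finsupp.single (i.1 - 1, i.2.1 + 1, i.2.2.1 + 1, i.2.2.2)
          (q ^ (2 * i.2.1) * (q - q ^ (2 * i.1 + 1)) * r) := by
  rw [opV, Finsupp.lift_apply, Finsupp.sum_single_index (by simp)]
  rw [smul_add, Finsupp.smul_single, Finsupp.smul_single, Finsupp.smul_single,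
    Finsupp.smul_single, smul_eq_mul, smul_eq_mul, smul_eq_mul, smul_eq_mul]
  ring_nf

variable (hq : q ≠ 0)
include hq

set_option linter.unusedSectionVars false

lemma rel_uu' : (opU q) ∘ₗ opU' = q • (opU' ∘ₗ opU q) := by
  apply Finsupp.lhom_ext
  rintro ⟨a, b, c, d⟩ r
  simp only [LinearMap.comp_apply, LinearMap.smul_apply, opU'_single, opU_single,
    Finsupp.smul_single, smul_eq_mul]
  congr 1
  ring

lemma rel_u'v' : (opU' : (I4 →₀ k) →ₗ[k] _) ∘ₗ opV' q = q • (opV' q ∘ₗ opU') := by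
  apply Finsupp.lhom_ext
  rintro ⟨a, b, c, d⟩ r
  simp only [LinearMap.comp_apply, LinearMap.smul_apply, opU'_single, opV'_single,
    Finsupp.smul_single, smul_eq_mul]
  congr 1
  simp only [inv_pow]
  field_simp
  ring

lemma rel_uv' : (opU q) ∘ₗ opV' q = q ^ 2 • (opV' q ∘ₗ opU q) := by
  apply Finsupp.lhom_ext
  rintro ⟨a, b, c, d⟩ r
  simp only [LinearMap.comp_apply, LinearMap.smul_apply, opU_single, opV'_single,
    Finsupp.smul_single, smul_eq_mul]
  congr 1
  ring

lemma rel_vv' : (opV q) ∘ₗ opV' q = q • (opV' q ∘ₗ opV q) := by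
  apply Finsupp.lhom_ext
  rintro ⟨a, b, c, d⟩ r
  simp only [LinearMap.comp_apply, LinearMap.smul_apply, opV_single, opV'_single, map_add,
    Finsupp.smul_single, smul_eq_mul, smul_add]
  congr 1
  · congr 1
    ring
  · congr 1
    cases a with
    | zero => simp
    | succ a => simp only [Nat.add_sub_cancel, inv_pow]; field_simp; ring

lemma rel_uv : (opU q) ∘ₗ opV q = q • (opV q ∘ₗ opU q) := by
  apply Finsupp.lhom_ext
  rintro ⟨a, b, c, d⟩ r
  simp only [LinearMap.comp_apply, LinearMap.smul_apply, opV_single, opU_single, map_add,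
    Finsupp.smul_single, smul_eq_mul, smul_add]
  congr 1
  · congr 1
    simp only [inv_pow]
    field_simp
    ring
  · congr 1
    cases a with
    | zero => simp
    | succ a => simp only [Nat.succ_sub_one]; ring

lemma rel_vu' : (opV q) ∘ₗ opU' = q ^ 2 • ((opU' : (I4 →₀ k) →ₗ[k] _) ∘ₗ opV q)
    + (q - q ^ 3) • (opV' q ∘ₗ opU q) := by
  apply Finsupp.lhom_ext
  rintro ⟨a, b, c, d⟩ r
  simp only [LinearMap.comp_apply, LinearMap.smul_apply, LinearMap.add_apply, opV_single,
    opU_single, opU'_single, opV'_single, map_add, Finsupp.smul_single, smul_eq_mul, smul_add]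
  cases a with
  | zero =>
    simp only [Nat.mul_zero, Nat.zero_add, pow_one, sub_self, mul_zero, zero_mul,
      Finsupp.single_zero, add_zero, Nat.zero_sub, Nat.sub_zero, pow_zero, one_mul]
    congr 1 <;> congr 1 <;> ring
  | succ a =>
    simp only [Nat.succ_sub_one]
    conv_rhs => rw [add_assoc, ← Finsupp.single_add]
    congr 1
    · congr 1; ring
    · congr 1; simp only [inv_pow]; field_simp; ring

omit hq

noncomputable def rep : FreeAlgebra k (Fin 4) →ₐ[k] Module.End k (I4 →₀ k) :=
  FreeAlgebra.lift k (![opU q, opV q, opU', opV' q] : Fin 4 → Module.End k (I4 →₀ k))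

@[simp] lemma rep_i0 : rep q (ι k 0) = opU q := by simp [rep]
@[simp] lemma rep_i1 : rep q (ι k 1) = opV q := by simp [rep]
@[simp] lemma rep_i2 : rep q (ι k 2) = opU' := by simp [rep]
@[simp] lemma rep_i3 : rep q (ι k 3) = opV' q := by simp [rep]

include hq in
lemma rep_rel : ∀ ⦃x y⦄, TTPRel k q x y → rep q x = rep q y := by
  intro x y h
  cases h <;>
    simp only [map_mul, map_smul, map_add, rep_i0, rep_i1, rep_i2, rep_i3] <;>
    rw [show ∀ f g : Module.End k (I4 →₀ k), f * g = f ∘ₗ g from fun _ _ => rfl]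
  · exact rel_uv q hq
  · exact rel_u'v' q hq
  · exact rel_uu' q hq
  · rw [show ∀ f g : Module.End k (I4 →₀ k), f * g = f ∘ₗ g from fun _ _ => rfl,
      show ∀ f g : Module.End k (I4 →₀ k), f * g = f ∘ₗ g from fun _ _ => rfl]
    exact rel_vu' q hq
  · exact rel_uv' q hq
  · exact rel_vv' q hq

include hq in
noncomputable def phi : RingQuot (TTPRel k q) →ₐ[k] Module.End k (I4 →₀ k) :=
  RingQuot.liftAlgHom k ⟨rep q, rep_rel q hq⟩

include hq in
lemma phi_mk (x : FreeAlgebra k (Fin 4)) :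
    phi q hq (RingQuot.mkAlgHom k (TTPRel k q) x) = rep q x := by
  rw [phi, RingQuot.liftAlgHom_mkAlgHom_apply]

lemma opV_pow (d : ℕ) :
    ((opV q) ^ d) (e ((0:ℕ), (0:ℕ), (0:ℕ), (0:ℕ))) = e (0, 0, 0, d) := by
  induction d with
  | zero => simp
  | succ n ih => rw [pow_succ', Module.End.mul_apply, ih, opV_single]; simp

lemma opU_pow (c d : ℕ) :
    ((opU q) ^ c) (e ((0:ℕ), (0:ℕ), (0:ℕ), d)) = e (0, 0, c, d) := by
  induction c with
  | zero => simp
  | succ n ih => rw [pow_succ', Module.End.mul_apply, ih, opU_single]; simp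

lemma opV'_pow (b c d : ℕ) :
    ((opV' q) ^ b) (e ((0:ℕ), (0:ℕ), c, d)) = e (0, b, c, d) := by
  induction b with
  | zero => simp
  | succ n ih => rw [pow_succ', Module.End.mul_apply, ih, opV'_single]; simp

lemma opU'_pow (a b c d : ℕ) :
    ((opU' : (I4 →₀ k) →ₗ[k] _) ^ a) (e ((0:ℕ), b, c, d)) = e (a, b, c, d) := by
  induction a with
  | zero => simp
  | succ n ih => rw [pow_succ', Module.End.mul_apply, ih, opU'_single]

noncomputable def gU : RingQuot (TTPRel k q) := RingQuot.mkAlgHom k (TTPRel k q) (ι k 0)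
noncomputable def gV : RingQuot (TTPRel k q) := RingQuot.mkAlgHom k (TTPRel k q) (ι k 1)
noncomputable def gX : RingQuot (TTPRel k q) := RingQuot.mkAlgHom k (TTPRel k q) (ι k 2)
noncomputable def gY : RingQuot (TTPRel k q) := RingQuot.mkAlgHom k (TTPRel k q) (ι k 3)

noncomputable def F (i : I4) : RingQuot (TTPRel k q) :=
  gX q ^ i.1 * gY q ^ i.2.1 * gU q ^ i.2.2.1 * gV q ^ i.2.2.2

lemma r1 : gU q * gV q = q • (gV q * gU q) := by
  simpa only [map_mul, map_smul, gU, gV] using RingQuot.mkAlgHom_rel k (TTPRel.uv (k := k) (q := q))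
lemma r2 : gX q * gY q = q • (gY q * gX q) := by
  simpa only [map_mul, map_smul, gX, gY] using RingQuot.mkAlgHom_rel k (TTPRel.u'v' (k := k) (q := q))
lemma r3 : gU q * gX q = q • (gX q * gU q) := by
  simpa only [map_mul, map_smul, gU, gX] using RingQuot.mkAlgHom_rel k (TTPRel.uu' (k := k) (q := q))
lemma r4 : gV q * gX q = q ^ 2 • (gX q * gV q) + (q - q ^ 3) • (gY q * gU q) := by
  simpa only [map_mul, map_smul, map_add, gU, gV, gX, gY] using
    RingQuot.mkAlgHom_rel k (TTPRel.vu' (k := k) (q := q))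
lemma r5 : gU q * gY q = q ^ 2 • (gY q * gU q) := by
  simpa only [map_mul, map_smul, gU, gY] using RingQuot.mkAlgHom_rel k (TTPRel.uv' (k := k) (q := q))
lemma r6 : gV q * gY q = q • (gY q * gV q) := by
  simpa only [map_mul, map_smul, gV, gY] using RingQuot.mkAlgHom_rel k (TTPRel.vv' (k := k) (q := q))

lemma eX (i : I4) : gX q * F q i = F q (i.1 + 1, i.2.1, i.2.2.1, i.2.2.2) := by
  obtain ⟨a, b, c, d⟩ := i
  show gX q * (gX q ^ a * gY q ^ b * gU q ^ c * gV q ^ d) = _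
  rw [← mul_assoc, ← mul_assoc, ← mul_assoc, ← pow_succ']
  rfl

lemma eY0 (b c d : ℕ) : gY q * F q (0, b, c, d) = F q (0, b + 1, c, d) := by
  show gY q * (gX q ^ 0 * gY q ^ b * gU q ^ c * gV q ^ d) = _
  rw [pow_zero, one_mul, ← mul_assoc, ← mul_assoc, ← pow_succ']
  show _ = gX q ^ 0 * gY q ^ (b + 1) * gU q ^ c * gV q ^ d
  rw [pow_zero, one_mul]

lemma eU0 (c d : ℕ) : gU q * F q (0, 0, c, d) = F q (0, 0, c + 1, d) := by
  show gU q * (gX q ^ 0 * gY q ^ 0 * gU q ^ c * gV q ^ d) = _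
  rw [pow_zero, pow_zero, one_mul, one_mul, ← mul_assoc, ← pow_succ']
  show _ = gX q ^ 0 * gY q ^ 0 * gU q ^ (c + 1) * gV q ^ d
  rw [pow_zero, pow_zero, one_mul, one_mul]

lemma eV0 (d : ℕ) : gV q * F q (0, 0, 0, d) = F q (0, 0, 0, d + 1) := by
  show gV q * (gX q ^ 0 * gY q ^ 0 * gU q ^ 0 * gV q ^ d) = _
  simp only [pow_zero, one_mul, ← pow_succ']
  show _ = gX q ^ 0 * gY q ^ 0 * gU q ^ 0 * gV q ^ (d + 1)
  simp only [pow_zero, one_mul]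

lemma span_top (hq : q ≠ 0) : Submodule.span k (Set.range (F q)) = ⊤ := by
  set S := Submodule.span k (Set.range (F q)) with hS
  have hfS : ∀ i : I4, F q i ∈ S := fun i => Submodule.subset_span ⟨i, rfl⟩
  -- closure of S under left multiplication by gX
  have CX : ∀ s ∈ S, gX q * s ∈ S := by
    intro s hs
    induction hs using Submodule.span_induction with
    | mem z hz => obtain ⟨i, rfl⟩ := hz; rw [eX q i]; exact hfS _
    | zero => simp
    | add a b _ _ ha hb => rw [mul_add]; exact S.add_mem ha hb
    | smul c a _ ha => rw [mul_smul_comm]; exact S.smul_mem c ha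
  -- left multiplication by gY
  have PY : ∀ a b c d : ℕ, gY q * F q (a, b, c, d) ∈ S := by
    intro a
    induction a with
    | zero => intro b c d; rw [eY0 q b c d]; exact hfS _
    | succ a ih =>
      intro b c d
      rw [← eX q (a, b, c, d), ← mul_assoc, swap_smul hq (r2 q), smul_mul_assoc, mul_assoc]
      exact S.smul_mem _ (CX _ (ih b c d))
  have CY : ∀ s ∈ S, gY q * s ∈ S := by
    intro s hs
    induction hs using Submodule.span_induction with
    | mem z hz => obtain ⟨i, rfl⟩ := hz; exact PY i.1 i.2.1 i.2.2.1 i.2.2.2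
    | zero => simp
    | add a b _ _ ha hb => rw [mul_add]; exact S.add_mem ha hb
    | smul c a _ ha => rw [mul_smul_comm]; exact S.smul_mem c ha
  -- left multiplication by gU
  have PU : ∀ a b c d : ℕ, gU q * F q (a, b, c, d) ∈ S := by
    intro a
    induction a with
    | zero =>
      intro b
      induction b with
      | zero => intro c d; rw [eU0 q c d]; exact hfS _
      | succ b ihb =>
        intro c d
        rw [← eY0 q b c d, ← mul_assoc, r5 q, smul_mul_assoc, mul_assoc]
        exact S.smul_mem _ (CY _ (ihb c d))
    | succ a ih =>
      intro b c d
      rw [← eX q (a, b, c, d), ← mul_assoc, r3 q, smul_mul_assoc, mul_assoc]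
      exact S.smul_mem _ (CX _ (ih b c d))
  have CU : ∀ s ∈ S, gU q * s ∈ S := by
    intro s hs
    induction hs using Submodule.span_induction with
    | mem z hz => obtain ⟨i, rfl⟩ := hz; exact PU i.1 i.2.1 i.2.2.1 i.2.2.2
    | zero => simp
    | add a b _ _ ha hb => rw [mul_add]; exact S.add_mem ha hb
    | smul c a _ ha => rw [mul_smul_comm]; exact S.smul_mem c ha
  -- left multiplication by gV
  have PV : ∀ a b c d : ℕ, gV q * F q (a, b, c, d) ∈ S := by
    intro a
    induction a with
    | zero =>
      intro b
      induction b with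
      | zero =>
        intro c
        induction c with
        | zero => intro d; rw [eV0 q d]; exact hfS _
        | succ c ihc =>
          intro d
          rw [← eU0 q c d, ← mul_assoc, swap_smul hq (r1 q), smul_mul_assoc, mul_assoc]
          exact S.smul_mem _ (CU _ (ihc d))
      | succ b ihb =>
        intro c d
        rw [← eY0 q b c d, ← mul_assoc, r6 q, smul_mul_assoc, mul_assoc]
        exact S.smul_mem _ (CY _ (ihb c d))
    | succ a ih =>
      intro b c d
      rw [← eX q (a, b, c, d), ← mul_assoc, r4 q, add_mul, smul_mul_assoc, smul_mul_assoc,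
        mul_assoc, mul_assoc]
      exact S.add_mem (S.smul_mem _ (CX _ (ih b c d)))
        (S.smul_mem _ (CY _ (PU a b c d)))
  have CV : ∀ s ∈ S, gV q * s ∈ S := by
    intro s hs
    induction hs using Submodule.span_induction with
    | mem z hz => obtain ⟨i, rfl⟩ := hz; exact PV i.1 i.2.1 i.2.2.1 i.2.2.2
    | zero => simp
    | add a b _ _ ha hb => rw [mul_add]; exact S.add_mem ha hb
    | smul c a _ ha => rw [mul_smul_comm]; exact S.smul_mem c ha
  -- every element of the quotient is in S
  have main : ∀ w : FreeAlgebra k (Fin 4), ∀ s ∈ S,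
      RingQuot.mkAlgHom k (TTPRel k q) w * s ∈ S := by
    intro w
    induction w using FreeAlgebra.induction with
    | grade0 r =>
      intro s hs
      rw [AlgHom.commutes, ← Algebra.smul_def]
      exact S.smul_mem r hs
    | grade1 j =>
      intro s hs
      fin_cases j
      · exact CU s hs
      · exact CV s hs
      · exact CX s hs
      · exact CY s hs
    | mul a b ha hb =>
      intro s hs
      rw [map_mul, mul_assoc]
      exact ha _ (hb s hs)
    | add a b ha hb =>
      intro s hs
      rw [map_add, add_mul]
      exact S.add_mem (ha s hs) (hb s hs)
  have h1 : (1 : RingQuot (TTPRel k q)) ∈ S := by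
    have := hfS (0, 0, 0, 0)
    simpa [F] using this
  rw [eq_top_iff]
  rintro z -
  obtain ⟨w, rfl⟩ := RingQuot.mkAlgHom_surjective k (TTPRel k q) z
  simpa using main w 1 h1


end TTPaux

open TTPaux in
/-- PBW basis for the twisted tensor product of two quantum planes: for `q ≠ 0`, the
algebra `R` generated by `u, v, u', v'` subject to the relations `uv = qvu`,
`u'v' = qv'u'`, `uu' = qu'u`, `vu' = q²u'v + (q−q³)v'u`, `uv' = q²v'u`, `vv' = qv'v`
has `k`-basis `{(u')^{i₁}(v')^{i₂}u^{i₃}v^{i₄} : i₁,i₂,i₃,i₄ ∈ ℕ}`. -/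
theorem twisted_tensor_product_pbw_basis (k : Type*) [Field k] (q : k) (hq : q ≠ 0) :
    let π := RingQuot.mkAlgHom k (TTPRel k q)
    let f : ℕ × ℕ × ℕ × ℕ → RingQuot (TTPRel k q) := fun i =>
      π (ι k 2) ^ i.1 * π (ι k 3) ^ i.2.1 * π (ι k 0) ^ i.2.2.1 * π (ι k 1) ^ i.2.2.2
    LinearIndependent k f ∧ Submodule.span k (Set.range f) = ⊤ := by
  intro π f
  constructor
  · -- linear independence via the representation on `I4 →₀ k`
    have hcomp : ∀ i : I4,
        phi q hq (f i) (e ((0:ℕ), (0:ℕ), (0:ℕ), (0:ℕ))) = e i := by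
      rintro ⟨a, b, c, d⟩
      show phi q hq (RingQuot.mkAlgHom k (TTPRel k q) (ι k 2) ^ a *
          RingQuot.mkAlgHom k (TTPRel k q) (ι k 3) ^ b *
          RingQuot.mkAlgHom k (TTPRel k q) (ι k 0) ^ c *
          RingQuot.mkAlgHom k (TTPRel k q) (ι k 1) ^ d) (e (0, 0, 0, 0)) = e (a, b, c, d)
      simp only [map_mul, map_pow, phi_mk, rep_i0, rep_i1, rep_i2, rep_i3,
        Module.End.mul_apply]
      rw [opV_pow, opU_pow, opV'_pow, opU'_pow]
    let g : RingQuot (TTPRel k q) →ₗ[k] (I4 →₀ k) :=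
      (LinearMap.applyₗ (e ((0:ℕ), (0:ℕ), (0:ℕ), (0:ℕ)))).comp (phi q hq).toLinearMap
    apply LinearIndependent.of_comp g
    have : (⇑g ∘ f) = fun i : I4 => Finsupp.single i (1:k) := by
      funext i
      exact hcomp i
    rw [this]
    exact (Finsupp.basisSingleOne (R := k) (ι := I4)).linearIndependent
  · -- spanning
    exact span_top q hq
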